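/- Suboptimality decomposition for conditional generation: let f*(r) be the ground-truth reward with f*(r) = g*(r_∥) + h*(r_⊥) where r = r_∥ when r lies on the data support (so h*(r_⊥)=0 there), let f̂ be an estimated reward with E_{r∼q_a}[f̂(r)] = a, and let q_a and p̂_a be the true and estimated conditional distributions given reward value a. Then a − E_{r∼p̂_a}[f*(r)] ≤ E_{r∼q_a}|f̂(r) − g*(r)| + |E_{r∼q_a}[g*(r_∥)] − E_{r∼p̂_a}[g*(r_∥)]| + E_{r∼p̂_a}[|h*(r_⊥)|]. -/
import Mathlib


open MeasureTheory

/-- Suboptimality decomposition for conditional generation: with ground-truth reward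
`f* = g* + h*` where `h*` vanishes on the support of the true conditional distribution
`q_a`, and an estimated reward `fhat` with `E_{q_a}[fhat] = a`, the suboptimality of the
estimated conditional distribution `p̂_a` is bounded by
`E_{q_a}|fhat − g*| + |E_{q_a}[g*] − E_{p̂_a}[g*]| + E_{p̂_a}|h*|`. -/
theorem stmt9 {E : Type*} [MeasurableSpace E]
    (qa phat : Measure E) [IsProbabilityMeasure qa] [IsProbabilityMeasure phat]
    (fstar gstar hstar fhat : E → ℝ) (a : ℝ)
    (hdecomp : ∀ r, fstar r = gstar r + hstar r)
    (hvanish : ∀ᵐ r ∂qa, hstar r = 0)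
    (hmean : ∫ r, fhat r ∂qa = a)
    (hint1 : Integrable fstar phat) (hint2 : Integrable gstar phat)
    (hint3 : Integrable hstar phat) (hint4 : Integrable gstar qa)
    (hint5 : Integrable fhat qa) :
    a - ∫ r, fstar r ∂phat
      ≤ (∫ r, |fhat r - gstar r| ∂qa)
        + |(∫ r, gstar r ∂qa) - ∫ r, gstar r ∂phat|
        + ∫ r, |hstar r| ∂phat := by
  have hph : ∫ r, fstar r ∂phat = (∫ r, gstar r ∂phat) + ∫ r, hstar r ∂phat := by
    rw [← integral_add hint2 hint3]
    exact integral_congr_ae (Filter.Eventually.of_forall (fun r => hdecomp r))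
  have h1 : (∫ r, fhat r ∂qa) - ∫ r, gstar r ∂qa ≤ ∫ r, |fhat r - gstar r| ∂qa := by
    rw [← integral_sub hint5 hint4]
    exact le_trans (le_abs_self _) ((by simpa using norm_integral_le_integral_norm (fun r => fhat r - gstar r)))
  have h2 : (∫ r, gstar r ∂qa) - ∫ r, gstar r ∂phat
      ≤ |(∫ r, gstar r ∂qa) - ∫ r, gstar r ∂phat| := le_abs_self _
  have h3 : -(∫ r, hstar r ∂phat) ≤ ∫ r, |hstar r| ∂phat := by
    calc -(∫ r, hstar r ∂phat) ≤ |∫ r, hstar r ∂phat| := neg_le_abs _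
    _ ≤ ∫ r, |hstar r| ∂phat := (by simpa using norm_integral_le_integral_norm hstar)
  rw [← hmean, hph]
  linarith
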